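/- arXiv:1407.6636 — 2 statements merged into one kernel-verified Lean document; each statement's English description precedes it below -/
import Mathlib

section
/- Let μ be a nonzero uniformly distributed measure on (ℍ^n, d_H) with supp(μ) ≠ ℍ^n, and fix x₀ ∈ supp(μ). For x ∈ ℝ^{2n+1} and s > 0, the integrals ∫ exp(-s·d_H(x,z)⁴) dμ(z) are finite, and the value of ∫ exp(-s·d_H(x,z)⁴) dμ(z) is the same for all x ∈ supp(μ); hence F(x,s) = ∫ (exp(-s·d_H(x,z)⁴) - exp(-s·d_H(x₀,z)⁴)) dμ(z) is well defined. Moreover, x ∈ supp(μ) if and only if F(x,s) = 0 for every s > 0; that is, supp(μ) = ⋂_{s>0} {x ∈ ℝ^{2n+1} : F(x,s) = 0}. -/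
open MeasureTheory Set Filter ENNReal NNReal

noncomputable section

/-- The underlying space of the Heisenberg group `ℍⁿ = ℝ²ⁿ × ℝ`. -/
abbrev Heis (n : ℕ) := EuclideanSpace ℝ (Fin (2 * n)) × ℝ

/-- The symplectic form `A(x',y') = -2 ∑ (x_j y_{j+n} - x_{j+n} y_j)` on `ℝ²ⁿ`. -/
def symp {n : ℕ} (x y : EuclideanSpace ℝ (Fin (2 * n))) : ℝ :=
  -2 * ∑ j : Fin n,
    (x ⟨j.1, by have := j.isLt; omega⟩ * y ⟨j.1 + n, by have := j.isLt; omega⟩ -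
     x ⟨j.1 + n, by have := j.isLt; omega⟩ * y ⟨j.1, by have := j.isLt; omega⟩)

/-- The Heisenberg group multiplication. -/
def hmul {n : ℕ} (x y : Heis n) : Heis n := (x.1 + y.1, x.2 + y.2 + symp x.1 y.1)

/-- The Heisenberg group inverse, `x⁻¹ = -x`. -/
def hinv {n : ℕ} (x : Heis n) : Heis n := (-x.1, -x.2)

/-- The identity element `e = 0`. -/
def eH {n : ℕ} : Heis n := (0, 0)

/-- The Korányi norm `‖x‖_H = (|x'|⁴ + x_{2n+1}²)^{1/4}`. -/
def KNorm {n : ℕ} (x : Heis n) : ℝ := (‖x.1‖ ^ 4 + x.2 ^ 2) ^ ((1 : ℝ) / 4)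

/-- The Korányi metric `d_H(x,y) = ‖x⁻¹·y‖_H`. -/
def dH {n : ℕ} (x y : Heis n) : ℝ := KNorm (hmul (hinv x) y)

/-- The closed `d_H`-ball of center `x` and radius `r`. -/
def ballH {n : ℕ} (x : Heis n) (r : ℝ) : Set (Heis n) := {y | dH x y ≤ r}

/-- The support of a measure with respect to the Korányi metric. -/
def suppH {n : ℕ} (μ : Measure (Heis n)) : Set (Heis n) := {x | ∀ r > 0, 0 < μ (ballH x r)}

/-- A Radon measure is uniformly distributed if all balls centered on its support of
a common radius have the same measure. -/
def UniformlyDistributed {n : ℕ} (μ : Measure (Heis n)) : Prop :=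
  ∀ x ∈ suppH μ, ∀ y ∈ suppH μ, ∀ r : ℝ, 0 < r → μ (ballH x r) = μ (ballH y r)

/-- The dilations `δ_r(x', x_{2n+1}) = (r x', r² x_{2n+1})`. -/
def dil {n : ℕ} (r : ℝ) (x : Heis n) : Heis n := (r • x.1, r ^ 2 * x.2)

/-- `d_H`-diameter of a set, as an extended real. -/
def ediamH {n : ℕ} (E : Set (Heis n)) : ℝ≥0∞ :=
  ⨆ x ∈ E, ⨆ y ∈ E, ENNReal.ofReal (dH x y)

/-- The `s`-dimensional Hausdorff measure built from the Korányi metric `d_H`. -/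
def hausH {n : ℕ} (s : ℝ) (E : Set (Heis n)) : ℝ≥0∞ :=
  ⨆ (δ : ℝ) (_ : 0 < δ), ⨅ (t : ℕ → Set (Heis n)) (_ : E ⊆ ⋃ i, t i)
    (_ : ∀ i, ediamH (t i) ≤ ENNReal.ofReal δ), ∑' i, ediamH (t i) ^ s

/-- The Hausdorff dimension with respect to the Korányi metric `d_H`. -/
def dimHH {n : ℕ} (E : Set (Heis n)) : ℝ≥0∞ :=
  ⨆ (d : ℝ≥0) (_ : hausH (d : ℝ) E = ⊤), (d : ℝ≥0∞)

/-- `Θˢ(μ,x) = d`: the `s`-density of `μ` at `x` exists and equals `d`. -/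
def HasDensity {n : ℕ} (μ : Measure (Heis n)) (s : ℝ) (x : Heis n) (d : ℝ≥0∞) : Prop :=
  Tendsto (fun r : ℝ => μ (ballH x r) / ENNReal.ofReal (r ^ s)) (nhdsWithin 0 (Ioi 0)) (nhds d)

namespace HeisAux

lemma symp_add_left {n : ℕ} (x y z : EuclideanSpace ℝ (Fin (2 * n))) :
    symp (x + y) z = symp x z + symp y z := by
  simp only [symp, PiLp.add_apply]
  rw [← mul_add, ← Finset.sum_add_distrib]
  congr 1
  apply Finset.sum_congr rfl
  intro j _
  ring

lemma symp_add_right {n : ℕ} (x y z : EuclideanSpace ℝ (Fin (2 * n))) :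
    symp x (y + z) = symp x y + symp x z := by
  simp only [symp, PiLp.add_apply]
  rw [← mul_add, ← Finset.sum_add_distrib]
  congr 1
  apply Finset.sum_congr rfl
  intro j _
  ring

lemma symp_neg_left {n : ℕ} (x y : EuclideanSpace ℝ (Fin (2 * n))) :
    symp (-x) y = - symp x y := by
  simp only [symp, PiLp.neg_apply]
  rw [← mul_neg, ← Finset.sum_neg_distrib]
  congr 1
  apply Finset.sum_congr rfl
  intro j _
  ring

lemma symp_swap {n : ℕ} (x y : EuclideanSpace ℝ (Fin (2 * n))) :
    symp x y = - symp y x := by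
  simp only [symp]
  rw [← mul_neg, ← Finset.sum_neg_distrib]
  congr 1
  apply Finset.sum_congr rfl
  intro j _
  ring

lemma symp_self {n : ℕ} (x : EuclideanSpace ℝ (Fin (2 * n))) : symp x x = 0 := by
  have := symp_swap x x; linarith

lemma symp_neg_right {n : ℕ} (x y : EuclideanSpace ℝ (Fin (2 * n))) :
    symp x (-y) = - symp x y := by
  rw [symp_swap, symp_neg_left, symp_swap y x]; ring

lemma hmul_left_cancel {n : ℕ} (z u : Heis n) : hmul (hinv z) (hmul z u) = u := by
  simp only [hmul, hinv]
  ext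
  · simp
  · simp only [symp_add_right, symp_neg_left, symp_self]
    ring

lemma key_assoc {n : ℕ} (x y z : Heis n) :
    hmul (hinv x) z = hmul (hmul (hinv x) y) (hmul (hinv y) z) := by
  simp only [hmul, hinv]
  ext
  · simp only [PiLp.add_apply, PiLp.neg_apply]; ring
  · simp only [symp_add_left, symp_add_right, symp_neg_left, symp_neg_right, symp_self]
    linarith [symp_swap y.1 x.1]

lemma hinv_hmul_hinv {n : ℕ} (x y : Heis n) :
    hinv (hmul (hinv x) y) = hmul (hinv y) x := by
  simp only [hmul, hinv]
  ext
  · simp only [PiLp.neg_apply, PiLp.add_apply]; ring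
  · simp only [symp_add_right, symp_neg_left, symp_self]
    have := symp_swap x.1 y.1
    simp only [neg_add_rev, neg_neg]
    linarith [symp_swap y.1 x.1]

end HeisAux

namespace HeisAux

lemma base_nonneg {n : ℕ} (x : Heis n) : 0 ≤ ‖x.1‖ ^ 4 + x.2 ^ 2 := by positivity

lemma KNorm_nonneg {n : ℕ} (x : Heis n) : 0 ≤ KNorm x :=
  Real.rpow_nonneg (base_nonneg x) _

lemma dH_nonneg {n : ℕ} (x y : Heis n) : 0 ≤ dH x y := KNorm_nonneg _

lemma KNorm_pow_four {n : ℕ} (x : Heis n) : KNorm x ^ 4 = ‖x.1‖ ^ 4 + x.2 ^ 2 := by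
  rw [KNorm, ← Real.rpow_natCast (_ ^ ((1:ℝ)/4)) 4, ← Real.rpow_mul (base_nonneg x)]
  norm_num

lemma KNorm_le_iff {n : ℕ} (x : Heis n) {r : ℝ} (hr : 0 ≤ r) :
    KNorm x ≤ r ↔ ‖x.1‖ ^ 4 + x.2 ^ 2 ≤ r ^ 4 := by
  rw [← KNorm_pow_four]
  exact (pow_le_pow_iff_left₀ (KNorm_nonneg x) hr (by norm_num)).symm

lemma norm_fst_le {n : ℕ} (x : Heis n) : ‖x.1‖ ≤ KNorm x := by
  rw [← pow_le_pow_iff_left₀ (norm_nonneg _) (KNorm_nonneg x) (n := 4) (by norm_num),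
    KNorm_pow_four]
  nlinarith [sq_nonneg x.2]

lemma abs_snd_le {n : ℕ} (x : Heis n) : |x.2| ≤ KNorm x ^ 2 := by
  rw [← pow_le_pow_iff_left₀ (abs_nonneg _) (by positivity) (n := 2) (by norm_num), sq_abs,
    ← pow_mul, KNorm_pow_four]
  nlinarith [pow_nonneg (norm_nonneg x.1) 4]

lemma coord_abs_le_norm {n : ℕ} (x : EuclideanSpace ℝ (Fin (2 * n))) (i : Fin (2 * n)) :
    |x i| ≤ ‖x‖ := by
  rw [EuclideanSpace.norm_eq, ← Real.sqrt_sq_eq_abs (x i)]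
  apply Real.sqrt_le_sqrt
  have h : x i ^ 2 = ‖x i‖ ^ 2 := by rw [Real.norm_eq_abs, sq_abs]
  rw [h]
  exact Finset.single_le_sum (f := fun j : Fin (2 * n) => ‖x j‖ ^ 2) (fun j _ => by positivity) (Finset.mem_univ i)

lemma symp_abs_le {n : ℕ} (x y : EuclideanSpace ℝ (Fin (2 * n))) :
    |symp x y| ≤ 4 * n * ‖x‖ * ‖y‖ := by
  have hb : ∀ (i j : Fin (2 * n)), |x i * y j| ≤ ‖x‖ * ‖y‖ := by
    intro i j
    rw [abs_mul]
    exact mul_le_mul (coord_abs_le_norm x i) (coord_abs_le_norm y j) (abs_nonneg _)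
      ((abs_nonneg _).trans (coord_abs_le_norm x i))
  rw [symp, abs_mul]
  have h1 : |(-2 : ℝ)| = 2 := by norm_num
  rw [h1]
  have h2 : |∑ j : Fin n, (x ⟨j.1, by have := j.isLt; omega⟩ * y ⟨j.1 + n, by have := j.isLt; omega⟩ -
      x ⟨j.1 + n, by have := j.isLt; omega⟩ * y ⟨j.1, by have := j.isLt; omega⟩)| ≤
      ∑ j : Fin n, (2 * (‖x‖ * ‖y‖)) := by
    refine (Finset.abs_sum_le_sum_abs _ _).trans (Finset.sum_le_sum ?_)
    intro j _
    calc |_ - _| ≤ |_| + |_| := abs_sub _ _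
    _ ≤ ‖x‖ * ‖y‖ + ‖x‖ * ‖y‖ := add_le_add (hb _ _) (hb _ _)
    _ = 2 * (‖x‖ * ‖y‖) := by ring
  rw [Finset.sum_const, Finset.card_univ, Fintype.card_fin, nsmul_eq_mul] at h2
  nlinarith [h2, abs_nonneg (∑ j : Fin n, (x ⟨j.1, by have := j.isLt; omega⟩ * y ⟨j.1 + n, by have := j.isLt; omega⟩ -
      x ⟨j.1 + n, by have := j.isLt; omega⟩ * y ⟨j.1, by have := j.isLt; omega⟩))]

lemma KNorm_hmul_le {n : ℕ} (x y : Heis n) :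
    KNorm (hmul x y) ≤ (2 * n + 2) * (KNorm x + KNorm y) := by
  set a := KNorm x with ha'
  set b := KNorm y with hb'
  have ha : 0 ≤ a := KNorm_nonneg x
  have hb : 0 ≤ b := KNorm_nonneg y
  have hN : (0:ℝ) ≤ (n:ℝ) := Nat.cast_nonneg n
  rw [KNorm_le_iff _ (by positivity)]
  have hx1 : ‖x.1‖ ≤ a := norm_fst_le x
  have hy1 : ‖y.1‖ ≤ b := norm_fst_le y
  have hx2 : |x.2| ≤ a ^ 2 := abs_snd_le x
  have hy2 : |y.2| ≤ b ^ 2 := abs_snd_le y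
  have hs : |symp x.1 y.1| ≤ 4 * n * (a * b) := by
    refine (symp_abs_le x.1 y.1).trans ?_
    have : ‖x.1‖ * ‖y.1‖ ≤ a * b :=
      mul_le_mul hx1 hy1 (norm_nonneg _) ha
    nlinarith
  have hfst : ‖(hmul x y).1‖ ^ 4 ≤ (a + b) ^ 4 := by
    have h := (norm_add_le x.1 y.1).trans (add_le_add hx1 hy1)
    have : ‖(hmul x y).1‖ ≤ a + b := by simpa [hmul] using h
    exact pow_le_pow_left₀ (norm_nonneg _) this 4
  have hsnd : ((hmul x y).2) ^ 2 ≤ ((2 * n + 1) * (a + b) ^ 2) ^ 2 := by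
    have habs : |(hmul x y).2| ≤ (2 * n + 1) * (a + b) ^ 2 := by
      have h1 : |x.2 + y.2 + symp x.1 y.1| ≤ |x.2| + |y.2| + |symp x.1 y.1| :=
        (abs_add_le _ _).trans (add_le_add (abs_add_le _ _) le_rfl)
      have : |x.2| + |y.2| + |symp x.1 y.1| ≤ a ^ 2 + b ^ 2 + 4 * n * (a * b) := by
        linarith
      have h3 : a ^ 2 + b ^ 2 + 4 * n * (a * b) ≤ (2 * n + 1) * (a + b) ^ 2 := by
        nlinarith [sq_nonneg (a - b), mul_nonneg ha hb]
      simp only [hmul]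
      linarith
    calc ((hmul x y).2) ^ 2 = |(hmul x y).2| ^ 2 := (sq_abs _).symm
    _ ≤ ((2 * n + 1) * (a + b) ^ 2) ^ 2 := pow_le_pow_left₀ (abs_nonneg _) habs 2
  have hconst : (1:ℝ) + (2 * n + 1) ^ 2 ≤ (2 * n + 2) ^ 4 := by nlinarith
  have hab4 : (0:ℝ) ≤ (a + b) ^ 4 := by positivity
  calc ‖(hmul x y).1‖ ^ 4 + ((hmul x y).2) ^ 2
      ≤ (a + b) ^ 4 + ((2 * n + 1) * (a + b) ^ 2) ^ 2 := add_le_add hfst hsnd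
    _ = (1 + (2 * n + 1) ^ 2) * (a + b) ^ 4 := by ring
    _ ≤ (2 * n + 2) ^ 4 * (a + b) ^ 4 := by nlinarith
    _ = ((2 * n + 2) * (a + b)) ^ 4 := by ring

lemma KNorm_hinv {n : ℕ} (x : Heis n) : KNorm (hinv x) = KNorm x := by
  simp [KNorm, hinv]

lemma dH_symm {n : ℕ} (x y : Heis n) : dH x y = dH y x := by
  rw [dH, dH, ← hinv_hmul_hinv x y, KNorm_hinv]

lemma dH_quasi {n : ℕ} (x y z : Heis n) : dH x z ≤ (2 * n + 2) * (dH x y + dH y z) := by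
  rw [dH, key_assoc x y z]
  exact KNorm_hmul_le _ _

lemma hmul_hinv_self {n : ℕ} (x : Heis n) : hmul (hinv x) x = eH := by
  simp only [hmul, hinv, eH]
  ext
  · simp
  · simp [symp_neg_left, symp_self]

lemma KNorm_eH {n : ℕ} : KNorm (eH (n := n)) = 0 := by
  simp only [KNorm, eH]
  norm_num

lemma dH_self {n : ℕ} (x : Heis n) : dH x x = 0 := by
  rw [dH, hmul_hinv_self, KNorm_eH]

lemma continuous_coord {n : ℕ} (i : Fin (2 * n)) :
    Continuous (fun v : EuclideanSpace ℝ (Fin (2 * n)) => v i) :=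
  (continuous_apply i).comp (PiLp.continuous_ofLp _ _)

set_option maxHeartbeats 1600000

lemma continuous_symp {n : ℕ} :
    Continuous (fun p : EuclideanSpace ℝ (Fin (2 * n)) × EuclideanSpace ℝ (Fin (2 * n)) =>
      symp p.1 p.2) := by
  unfold symp
  apply continuous_const.mul
  apply continuous_finset_sum
  intro j _
  exact (((continuous_coord _).comp continuous_fst).mul
    ((continuous_coord _).comp continuous_snd)).sub
    (((continuous_coord _).comp continuous_fst).mul
    ((continuous_coord _).comp continuous_snd))

lemma continuous_KNorm {n : ℕ} : Continuous (fun x : Heis n => KNorm x) := by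
  unfold KNorm
  apply Continuous.rpow_const
  · exact ((continuous_fst.norm.pow 4).add (continuous_snd.pow 2))
  · intro x; right; norm_num

lemma continuous_dH {n : ℕ} : Continuous (fun p : Heis n × Heis n => dH p.1 p.2) := by
  unfold dH
  apply continuous_KNorm.comp
  unfold hmul hinv
  refine Continuous.prodMk ?_ ?_
  · exact (continuous_fst.fst.neg).add continuous_snd.fst
  · exact ((continuous_fst.snd.neg).add continuous_snd.snd).add
      (continuous_symp.comp (Continuous.prodMk continuous_fst.fst.neg continuous_snd.fst))

lemma continuous_dH_left {n : ℕ} (x : Heis n) : Continuous (dH x) := by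
  unfold dH
  apply continuous_KNorm.comp
  unfold hmul hinv
  refine Continuous.prodMk (continuous_const.add continuous_fst) ?_
  exact (continuous_const.add continuous_snd).add
    (continuous_symp.comp (Continuous.prodMk continuous_const continuous_fst))

lemma isClosed_ballH {n : ℕ} (x : Heis n) (r : ℝ) : IsClosed (ballH x r) :=
  isClosed_le (continuous_dH_left x) continuous_const

lemma measurableSet_ballH {n : ℕ} (x : Heis n) (r : ℝ) : MeasurableSet (ballH x r) :=
  (isClosed_ballH x r).measurableSet

end HeisAux

namespace HeisAux

lemma symp_zero_left {n : ℕ} (y : EuclideanSpace ℝ (Fin (2 * n))) : symp 0 y = 0 := by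
  simp [symp]

lemma hmul_eH {n : ℕ} (u : Heis n) : hmul eH u = u := by
  simp only [hmul, eH]
  ext
  · simp
  · simp [symp_zero_left]

lemma hinv_eH {n : ℕ} : hinv (eH : Heis n) = eH := by
  simp [hinv, eH]

lemma dH_eH {n : ℕ} (u : Heis n) : dH eH u = KNorm u := by
  rw [dH, hinv_eH, hmul_eH]

lemma dH_hmul_left {n : ℕ} (z u : Heis n) : dH z (hmul z u) = KNorm u := by
  rw [dH, hmul_left_cancel]

lemma mem_ballH_iff {n : ℕ} {x y : Heis n} {r : ℝ} : y ∈ ballH x r ↔ dH x y ≤ r := Iff.rfl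

lemma ballH_mono {n : ℕ} (x : Heis n) {r r' : ℝ} (h : r ≤ r') : ballH x r ⊆ ballH x r' :=
  fun z hz => le_trans hz h

lemma ballH_subset {n : ℕ} {x y : Heis n} {a b : ℝ} (h : dH x y ≤ a) :
    ballH y b ⊆ ballH x ((2 * n + 2) * (a + b)) := by
  intro z hz
  refine le_trans (dH_quasi x y z) ?_
  have := hz
  rw [mem_ballH_iff] at this
  have h2 : dH x y + dH y z ≤ a + b := add_le_add h this
  have h3 : (0:ℝ) ≤ 2 * n + 2 := by positivity
  exact mul_le_mul_of_nonneg_left h2 h3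

lemma isCompact_ballH {n : ℕ} (x : Heis n) (r : ℝ) : IsCompact (ballH x r) := by
  apply Metric.isCompact_of_isClosed_isBounded (isClosed_ballH x r)
  have hsub : ∀ r' : ℝ, 0 < r' → ballH x r' ⊆ Metric.closedBall x.1 r' ×ˢ
      Metric.closedBall x.2 (r' ^ 2 + 4 * n * ‖x.1‖ * (‖x.1‖ + r')) := by
    intro r' hr' z hz
    rw [mem_ballH_iff] at hz
    have h1 := (norm_fst_le (hmul (hinv x) z)).trans hz
    have h2 : |(hmul (hinv x) z).2| ≤ r' ^ 2 := by
      refine (abs_snd_le (hmul (hinv x) z)).trans ?_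
      exact pow_le_pow_left₀ (KNorm_nonneg _) hz 2
    simp only [hmul, hinv, PiLp.add_apply, PiLp.neg_apply] at h1 h2 ⊢
    constructor
    · rw [Metric.mem_closedBall, dist_eq_norm, ← neg_add_eq_sub]
      exact h1
    · rw [Metric.mem_closedBall, Real.dist_eq]
      have hz1 : ‖z.1‖ ≤ ‖x.1‖ + r' := by
        have h3 : ‖(-x.1 + z.1 : EuclideanSpace ℝ (Fin (2*n))) + x.1‖ ≤
            ‖(-x.1 + z.1 : EuclideanSpace ℝ (Fin (2*n)))‖ + ‖x.1‖ := norm_add_le _ _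
        have h4 : (-x.1 + z.1 : EuclideanSpace ℝ (Fin (2*n))) + x.1 = z.1 := by abel
        rw [h4] at h3
        linarith
      have hs := symp_abs_le (-x.1) z.1
      have h0 : ‖(-x.1 : EuclideanSpace ℝ (Fin (2*n)))‖ = ‖x.1‖ := norm_neg _
      rw [h0] at hs
      have hb : |symp (-x.1) z.1| ≤ 4 * n * ‖x.1‖ * (‖x.1‖ + r') := by
        refine hs.trans ?_
        have hn : (0:ℝ) ≤ 4 * n * ‖x.1‖ := by positivity
        exact mul_le_mul_of_nonneg_left hz1 hn
      have h4 : |z.2 - x.2| ≤ |(-x.2 + z.2) + symp (-x.1) z.1| + |symp (-x.1) z.1| := by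
        have h5 := abs_sub ((-x.2 + z.2) + symp (-x.1) z.1) (symp (-x.1) z.1)
        have heq : (-x.2 + z.2) + symp (-x.1) z.1 - symp (-x.1) z.1 = z.2 - x.2 := by ring
        rwa [heq] at h5
      linarith
  have hmono : ballH x r ⊆ ballH x (|r| + 1) := ballH_mono x (by
    have := abs_nonneg r
    have := le_abs_self r
    linarith)
  refine Bornology.IsBounded.subset ?_ (hmono.trans (hsub (|r| + 1) (by positivity)))
  exact Bornology.IsBounded.prod Metric.isBounded_closedBall Metric.isBounded_closedBall

lemma measurePreserving_hmul {n : ℕ} (z : Heis n) :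
    MeasurePreserving (hmul z) (volume : Measure (Heis n)) volume := by
  have hvol : (volume : Measure (Heis n)) =
      (volume : Measure (EuclideanSpace ℝ (Fin (2 * n)))).prod (volume : Measure ℝ) :=
    Measure.volume_eq_prod _ _
  rw [hvol]
  have hf : MeasurePreserving (fun a : EuclideanSpace ℝ (Fin (2 * n)) => z.1 + a)
      volume volume := measurePreserving_add_left volume z.1
  have hgm : Measurable (Function.uncurry
      (fun (a : EuclideanSpace ℝ (Fin (2 * n))) (t : ℝ) => z.2 + t + symp z.1 a)) := by
    apply Continuous.measurable
    exact ((continuous_const.add continuous_snd).add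
      (continuous_symp.comp (Continuous.prodMk continuous_const continuous_fst)))
  have hg : ∀ᵐ (a : EuclideanSpace ℝ (Fin (2 * n))) ∂(volume),
      Measure.map (fun t : ℝ => z.2 + t + symp z.1 a) volume = volume := by
    filter_upwards with a
    have heq : (fun t : ℝ => z.2 + t + symp z.1 a) =
        (fun t : ℝ => (z.2 + symp z.1 a) + t) := by funext t; ring
    rw [heq]
    exact (measurePreserving_add_left volume (z.2 + symp z.1 a)).map_eq
  have h := MeasurePreserving.skew_product hf hgm hg
  have heq : (fun p : EuclideanSpace ℝ (Fin (2 * n)) × ℝ =>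
      (z.1 + p.1, z.2 + p.2 + symp z.1 p.1)) = hmul z := by
    funext u
    simp [hmul]
  rwa [heq] at h

lemma volume_ballH {n : ℕ} (z : Heis n) (r : ℝ) :
    volume (ballH z r) = volume (ballH (eH : Heis n) r) := by
  have hpre : (hmul z) ⁻¹' (ballH z r) = ballH (eH : Heis n) r := by
    ext u
    simp only [mem_preimage, mem_ballH_iff, dH_hmul_left, dH_eH]
  rw [← hpre,
    (measurePreserving_hmul z).measure_preimage (measurableSet_ballH z r).nullMeasurableSet]

end HeisAux

namespace HeisAux

variable {n : ℕ}

lemma volume_ballK_le {r : ℝ} (hr : 0 ≤ r) :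
    volume (ballH (eH : Heis n) r) ≤
      ENNReal.ofReal (r ^ (2 * n)) *
        volume (Metric.ball (0 : EuclideanSpace ℝ (Fin (2 * n))) 1) *
        ENNReal.ofReal (2 * r ^ 2) := by
  have hsub : ballH (eH : Heis n) r ⊆
      Metric.closedBall (0 : EuclideanSpace ℝ (Fin (2 * n))) r ×ˢ Icc (-(r ^ 2)) (r ^ 2) := by
    intro z hz
    rw [mem_ballH_iff, dH_eH] at hz
    constructor
    · rw [Metric.mem_closedBall, dist_zero_right]
      exact (norm_fst_le z).trans hz
    · have h2 : |z.2| ≤ r ^ 2 := (abs_snd_le z).trans (pow_le_pow_left₀ (KNorm_nonneg z) hz 2)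
      exact abs_le.1 h2
  refine (measure_mono hsub).trans ?_
  have hprod : volume (Metric.closedBall (0 : EuclideanSpace ℝ (Fin (2 * n))) r ×ˢ
      Icc (-(r ^ 2)) (r ^ 2)) =
      volume (Metric.closedBall (0 : EuclideanSpace ℝ (Fin (2 * n))) r) *
        volume (Icc (-(r ^ 2)) (r ^ 2)) := by
    rw [Measure.volume_eq_prod]
    exact Measure.prod_prod _ _
  rw [hprod, Measure.addHaar_closedBall volume 0 hr, Real.volume_Icc]
  have h1 : Module.finrank ℝ (EuclideanSpace ℝ (Fin (2 * n))) = 2 * n := by simp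
  rw [h1]
  have h2 : r ^ 2 - -(r ^ 2) = 2 * r ^ 2 := by ring
  rw [h2]

lemma volume_ballK_pos {r : ℝ} (hr : 0 < r) : 0 < volume (ballH (eH : Heis n) r) := by
  have hsub : (Metric.closedBall (0 : EuclideanSpace ℝ (Fin (2 * n))) (r / 2) ×ˢ
      Icc (-(r ^ 2 / 2)) (r ^ 2 / 2)) ⊆ ballH (eH : Heis n) r := by
    rintro z ⟨h1, h2⟩
    rw [Metric.mem_closedBall, dist_zero_right] at h1
    rw [mem_Icc] at h2
    rw [mem_ballH_iff, dH_eH, KNorm_le_iff _ hr.le]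
    have ha : ‖z.1‖ ^ 4 ≤ (r / 2) ^ 4 := pow_le_pow_left₀ (norm_nonneg _) h1 4
    have hb : z.2 ^ 2 ≤ (r ^ 2 / 2) ^ 2 := sq_le_sq' h2.1 h2.2
    nlinarith [pow_pos hr 4]
  refine lt_of_lt_of_le ?_ (measure_mono hsub)
  have hprod : volume (Metric.closedBall (0 : EuclideanSpace ℝ (Fin (2 * n))) (r / 2) ×ˢ
      Icc (-(r ^ 2 / 2)) (r ^ 2 / 2)) =
      volume (Metric.closedBall (0 : EuclideanSpace ℝ (Fin (2 * n))) (r / 2)) *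
        volume (Icc (-(r ^ 2 / 2)) (r ^ 2 / 2)) := by
    rw [Measure.volume_eq_prod]
    exact Measure.prod_prod _ _
  rw [hprod, Real.volume_Icc]
  apply ENNReal.mul_pos
  · exact (Metric.measure_closedBall_pos volume 0 (by positivity)).ne'
  · have : r ^ 2 / 2 - -(r ^ 2 / 2) = r ^ 2 := by ring
    rw [this]
    exact (ENNReal.ofReal_pos.2 (by positivity)).ne'

lemma volume_ballK_lt_top (r : ℝ) : volume (ballH (eH : Heis n) r) < ⊤ :=
  (isCompact_ballH _ _).measure_lt_top

lemma not_mem_suppH_iff {μ : Measure (Heis n)} {x : Heis n} :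
    x ∉ suppH μ ↔ ∃ r > 0, μ (ballH x r) = 0 := by
  simp only [suppH, mem_setOf_eq, not_forall, exists_prop]
  constructor
  · rintro ⟨r, hr, h⟩
    exact ⟨r, hr, by simpa [pos_iff_ne_zero] using h⟩
  · rintro ⟨r, hr, h⟩
    exact ⟨r, hr, by simp [h]⟩

lemma isClosed_suppH (μ : Measure (Heis n)) : IsClosed (suppH μ) := by
  rw [← isOpen_compl_iff, isOpen_iff_mem_nhds]
  intro x hx
  rw [mem_compl_iff, not_mem_suppH_iff] at hx
  obtain ⟨r, hr, h0⟩ := hx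
  set ρ := r / (2 * (2 * n + 2)) with hρ
  have hρpos : 0 < ρ := by positivity
  have hV : IsOpen {y : Heis n | dH x y < ρ} := isOpen_lt (continuous_dH_left x) continuous_const
  refine Filter.mem_of_superset (hV.mem_nhds (by simp [dH_self, hρpos])) ?_
  intro y hy
  rw [mem_setOf_eq] at hy
  rw [mem_compl_iff, not_mem_suppH_iff]
  refine ⟨ρ, hρpos, ?_⟩
  have hsub : ballH y ρ ⊆ ballH x r := by
    refine (ballH_subset (x := x) (y := y) (a := ρ) hy.le).trans (ballH_mono x ?_)
    have h1 : (2 * (n:ℝ) + 2) ≠ 0 := by positivity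
    refine le_of_eq ?_
    rw [hρ]
    field_simp
    ring
  exact measure_mono_null hsub h0

lemma measure_compl_suppH (μ : Measure (Heis n)) : μ (suppH μ)ᶜ = 0 := by
  apply measure_null_of_locally_null
  intro x hx
  rw [mem_compl_iff, not_mem_suppH_iff] at hx
  obtain ⟨r, hr, h0⟩ := hx
  refine ⟨{y : Heis n | dH x y < r} ∩ (suppH μ)ᶜ, ?_, ?_⟩
  · exact Filter.inter_mem
      (mem_nhdsWithin_of_mem_nhds
        ((isOpen_lt (continuous_dH_left x) continuous_const).mem_nhds (by simp [dH_self, hr])))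
      self_mem_nhdsWithin
  · refine measure_mono_null ?_ h0
    exact fun y hy => mem_ballH_iff.2 (le_of_lt hy.1)

lemma ball_half_bound {μ : Measure (Heis n)} (hud : UniformlyDistributed μ)
    {x₀ : Heis n} (hx₀ : x₀ ∈ suppH μ) (w : Heis n) :
    μ (ballH w (1 / 2)) ≤ μ (ballH x₀ (2 * n + 2)) := by
  by_cases h : ∃ y ∈ suppH μ, dH w y ≤ 1 / 2
  · obtain ⟨y, hy, hyd⟩ := h
    have hsub : ballH w (1 / 2) ⊆ ballH y (2 * n + 2) := by
      have h1 : dH y w ≤ 1 / 2 := by rwa [dH_symm]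
      refine (ballH_subset (x := y) (y := w) (a := 1 / 2) h1).trans (ballH_mono y (by norm_num))
    refine (measure_mono hsub).trans ?_
    rw [hud y hy x₀ hx₀ (2 * n + 2) (by positivity)]
  · have hsub : ballH w (1 / 2) ⊆ (suppH μ)ᶜ := by
      intro z hz
      rw [mem_compl_iff]
      intro hzs
      exact h ⟨z, hzs, hz⟩
    rw [measure_mono_null hsub (measure_compl_suppH μ)]
    exact zero_le

lemma growth {μ : Measure (Heis n)} [μ.Regular] (hud : UniformlyDistributed μ)
    {x₀ : Heis n} (hx₀ : x₀ ∈ suppH μ) (x : Heis n) (R : ℝ) :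
    μ (ballH x R) * volume (ballH (eH : Heis n) (1 / 2)) ≤
      volume (ballH (eH : Heis n) ((2 * n + 2) * (R + 1))) * μ (ballH x₀ (2 * n + 2)) := by
  set B := ballH x R with hB
  set c₀ := volume (ballH (eH : Heis n) (1 / 2)) with hc₀
  set M := μ (ballH x₀ (2 * n + 2)) with hM
  haveI : IsFiniteMeasure (μ.restrict B) :=
    ⟨by rw [Measure.restrict_apply_univ]; exact (isCompact_ballH x R).measure_lt_top⟩
  set f : Heis n → Heis n → ℝ≥0∞ := fun z w => if dH z w ≤ 1 / 2 then 1 else 0 with hf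
  have hmeas_unc : Measurable (Function.uncurry f) := by
    have hset : MeasurableSet {p : Heis n × Heis n | dH p.1 p.2 ≤ 1 / 2} :=
      (isClosed_le continuous_dH continuous_const).measurableSet
    exact Measurable.ite hset measurable_const measurable_const
  have step1 : μ B * c₀ = ∫⁻ z in B, ∫⁻ w, f z w ∂volume ∂μ := by
    have h1 : ∀ z : Heis n, ∫⁻ w, f z w ∂volume = c₀ := by
      intro z
      have h2 : f z = (ballH z (1 / 2)).indicator 1 := by
        funext w
        simp [hf, Set.indicator_apply, ballH]
      rw [h2, lintegral_indicator_one (measurableSet_ballH z (1 / 2)), volume_ballH]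
    rw [lintegral_congr h1, setLIntegral_const, mul_comm]
  have step2 : ∫⁻ z in B, ∫⁻ w, f z w ∂volume ∂μ = ∫⁻ w, ∫⁻ z in B, f z w ∂μ ∂volume :=
    lintegral_lintegral_swap hmeas_unc.aemeasurable
  have step3 : ∀ w : Heis n, ∫⁻ z in B, f z w ∂μ ≤
      (ballH x ((2 * n + 2) * (R + 1))).indicator (fun _ => M) w := by
    intro w
    have hfz : (fun z => f z w) = (ballH w (1 / 2)).indicator 1 := by
      funext z
      simp only [hf, Set.indicator_apply, ballH, mem_setOf_eq, Pi.one_apply]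
      congr 1
      rw [dH_symm]
    by_cases hw : w ∈ ballH x ((2 * n + 2) * (R + 1))
    · rw [Set.indicator_of_mem hw]
      calc ∫⁻ z in B, f z w ∂μ = μ.restrict B (ballH w (1 / 2)) := by
            rw [hfz, lintegral_indicator_one (measurableSet_ballH w (1 / 2))]
        _ ≤ μ (ballH w (1 / 2)) := Measure.restrict_le_self _
        _ ≤ M := ball_half_bound hud hx₀ w
    · rw [Set.indicator_of_notMem hw]
      have hempty : ballH w (1 / 2) ∩ B = ∅ := by
        by_contra hne
        obtain ⟨z, hz1, hz2⟩ := Set.nonempty_iff_ne_empty.2 hne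
        apply hw
        rw [mem_ballH_iff]
        have h1 : dH x w ≤ (2 * n + 2) * (dH x z + dH z w) := dH_quasi x z w
        have h2 : dH z w ≤ 1 / 2 := by rw [dH_symm]; exact hz1
        have h3 : dH x z ≤ R := hz2
        have h4 : (0:ℝ) ≤ 2 * n + 2 := by positivity
        nlinarith
      rw [hfz, lintegral_indicator_one (measurableSet_ballH w (1 / 2)),
        Measure.restrict_apply (measurableSet_ballH w (1 / 2)), hempty]
      simp
  calc μ B * c₀ = ∫⁻ w, ∫⁻ z in B, f z w ∂μ ∂volume := by rw [step1, step2]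
    _ ≤ ∫⁻ w, (ballH x ((2 * n + 2) * (R + 1))).indicator (fun _ => M) w ∂volume :=
        lintegral_mono step3
    _ = M * volume (ballH x ((2 * n + 2) * (R + 1))) :=
        lintegral_indicator_const (measurableSet_ballH _ _) M
    _ = volume (ballH (eH : Heis n) ((2 * n + 2) * (R + 1))) * M := by
        rw [volume_ballH, mul_comm]

end HeisAux

namespace HeisAux

variable {n : ℕ}

lemma summable_aux (s : ℝ) (hs : 0 < s) (C : ℝ) (m : ℕ) :
    Summable (fun k : ℕ => C * (((k : ℝ) + 2) ^ m * Real.exp (-s) ^ k)) := by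
  apply Summable.mul_left
  set r := Real.exp (-s) with hrdef
  have hr0 : 0 < r := Real.exp_pos _
  have hr1 : r < 1 := by
    rw [hrdef, Real.exp_lt_one_iff]
    linarith
  have h := summable_pow_mul_geometric_of_norm_lt_one (R := ℝ) m
    (r := r) (by rw [Real.norm_eq_abs, abs_of_pos hr0]; exact hr1)
  have h2 : Summable (fun k : ℕ => (((k + 2 : ℕ) : ℝ)) ^ m * r ^ (k + 2)) :=
    (_root_.summable_nat_add_iff (f := fun j : ℕ => ((j : ℝ)) ^ m * r ^ j) 2).2 h
  have h3 := h2.mul_right ((r ^ 2)⁻¹)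
  refine h3.congr ?_
  intro k
  push_cast
  have : r ^ (k + 2) = r ^ k * r ^ 2 := by ring
  rw [this]
  field_simp

lemma lint_exp_lt_top {μ : Measure (Heis n)} [μ.Regular] (hud : UniformlyDistributed μ)
    {x₀ : Heis n} (hx₀ : x₀ ∈ suppH μ) (x : Heis n) (s : ℝ) (hs : 0 < s) :
    ∫⁻ z, ENNReal.ofReal (Real.exp (-s * dH x z ^ 4)) ∂μ < ⊤ := by
  set r := Real.exp (-s) with hrdef
  have hr0 : 0 < r := Real.exp_pos _
  set γ : ℝ := 2 * n + 2 with hγ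
  set c₀ := volume (ballH (eH : Heis n) (1 / 2)) with hc₀
  set M := μ (ballH x₀ γ) with hM
  set VB := volume (Metric.ball (0 : EuclideanSpace ℝ (Fin (2 * n))) 1) with hVB
  have hc₀0 : c₀ ≠ 0 := (volume_ballK_pos (by norm_num)).ne'
  have hc₀top : c₀ ≠ ⊤ := (volume_ballK_lt_top _).ne
  have hMtop : M ≠ ⊤ := (isCompact_ballH _ _).measure_lt_top.ne
  have hVBtop : VB ≠ ⊤ := measure_ball_lt_top.ne
  set g : ℕ → ℝ := fun k => r ^ k * ((γ * ((k : ℝ) + 2)) ^ (2 * n) * (2 * (γ * ((k : ℝ) + 2)) ^ 2))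
    with hg
  have hgnn : ∀ k, 0 ≤ g k := by
    intro k
    have : (0:ℝ) ≤ γ := by rw [hγ]; positivity
    have : (0:ℝ) ≤ γ * ((k : ℝ) + 2) := by positivity
    positivity
  have hgsum : Summable g := by
    have h1 : g = fun k : ℕ => (γ ^ (2 * n) * 2 * γ ^ 2) * (((k : ℝ) + 2) ^ (2 * n + 2) * r ^ k) := by
      funext k
      simp only [hg]
      clear_value γ
      rw [mul_pow]
      ring
    rw [h1]
    exact summable_aux s hs _ _
  -- pointwise bound
  have hpt : ∀ z : Heis n, ENNReal.ofReal (Real.exp (-s * dH x z ^ 4)) ≤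
      ∑' k : ℕ, (ballH x ((k : ℝ) + 1)).indicator (fun _ => ENNReal.ofReal (r ^ k)) z := by
    intro z
    set d := dH x z with hd
    have hd0 : 0 ≤ d := dH_nonneg x z
    set k₀ := ⌊d⌋₊ with hk₀
    have hmem : z ∈ ballH x ((k₀ : ℝ) + 1) :=
      mem_ballH_iff.2 (le_of_lt (Nat.lt_floor_add_one d))
    have hk₀le : (k₀ : ℝ) ≤ d ^ 4 := by
      rcases le_or_gt 1 d with h1 | h1
      · have h2 : (k₀ : ℝ) ≤ d := Nat.floor_le hd0
        have h3 : (1:ℝ) ≤ d ^ 3 := one_le_pow₀ h1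
        nlinarith [h3, h2, hd0]
      · have h2 : k₀ = 0 := Nat.floor_eq_zero.2 h1
        rw [h2]
        simp only [Nat.cast_zero]
        positivity
    have hexp : Real.exp (-s * d ^ 4) ≤ r ^ k₀ := by
      rw [hrdef, ← Real.exp_nat_mul]
      apply Real.exp_le_exp.2
      have : s * (k₀ : ℝ) ≤ s * d ^ 4 := mul_le_mul_of_nonneg_left hk₀le hs.le
      nlinarith
    calc ENNReal.ofReal (Real.exp (-s * d ^ 4)) ≤ ENNReal.ofReal (r ^ k₀) :=
          ENNReal.ofReal_le_ofReal hexp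
      _ = (ballH x ((k₀ : ℝ) + 1)).indicator (fun _ => ENNReal.ofReal (r ^ k₀)) z := by
          rw [Set.indicator_of_mem hmem]
      _ ≤ ∑' k : ℕ, (ballH x ((k : ℝ) + 1)).indicator (fun _ => ENNReal.ofReal (r ^ k)) z :=
          ENNReal.le_tsum k₀
  have hmeas : ∀ k : ℕ, AEMeasurable
      ((ballH x ((k : ℝ) + 1)).indicator (fun _ => ENNReal.ofReal (r ^ k))) μ :=
    fun k => ((measurable_const.indicator (measurableSet_ballH x _))).aemeasurable
  have step1 : ∫⁻ z, ENNReal.ofReal (Real.exp (-s * dH x z ^ 4)) ∂μ ≤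
      ∑' k : ℕ, ENNReal.ofReal (r ^ k) * μ (ballH x ((k : ℝ) + 1)) := by
    calc ∫⁻ z, ENNReal.ofReal (Real.exp (-s * dH x z ^ 4)) ∂μ
        ≤ ∫⁻ z, ∑' k : ℕ, (ballH x ((k : ℝ) + 1)).indicator
            (fun _ => ENNReal.ofReal (r ^ k)) z ∂μ := lintegral_mono hpt
      _ = ∑' k : ℕ, ∫⁻ z, (ballH x ((k : ℝ) + 1)).indicator
            (fun _ => ENNReal.ofReal (r ^ k)) z ∂μ := lintegral_tsum hmeas
      _ = ∑' k : ℕ, ENNReal.ofReal (r ^ k) * μ (ballH x ((k : ℝ) + 1)) := by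
          apply tsum_congr
          intro k
          rw [lintegral_indicator_const (measurableSet_ballH x _)]
  have hterm : ∀ k : ℕ, ENNReal.ofReal (r ^ k) * μ (ballH x ((k : ℝ) + 1)) ≤
      ENNReal.ofReal (g k) * (VB * (M / c₀)) := by
    intro k
    have hγk : (0:ℝ) ≤ γ * ((k : ℝ) + 2) := by
      have : (0:ℝ) ≤ γ := by rw [hγ]; positivity
      positivity
    have hgrow : μ (ballH x ((k : ℝ) + 1)) ≤
        volume (ballH (eH : Heis n) (γ * ((k : ℝ) + 2))) * M / c₀ := by
      rw [ENNReal.le_div_iff_mul_le (Or.inl hc₀0) (Or.inl hc₀top)]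
      have h := growth hud hx₀ x ((k : ℝ) + 1)
      have heq : ((k : ℝ) + 1) + 1 = (k : ℝ) + 2 := by ring
      rw [heq] at h
      exact h
    have hvol : volume (ballH (eH : Heis n) (γ * ((k : ℝ) + 2))) ≤
        ENNReal.ofReal ((γ * ((k : ℝ) + 2)) ^ (2 * n)) * VB *
          ENNReal.ofReal (2 * (γ * ((k : ℝ) + 2)) ^ 2) := volume_ballK_le hγk
    calc ENNReal.ofReal (r ^ k) * μ (ballH x ((k : ℝ) + 1))
        ≤ ENNReal.ofReal (r ^ k) *
          (volume (ballH (eH : Heis n) (γ * ((k : ℝ) + 2))) * M / c₀) :=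
          mul_le_mul_right hgrow _
      _ = ENNReal.ofReal (r ^ k) *
          (volume (ballH (eH : Heis n) (γ * ((k : ℝ) + 2))) * (M / c₀)) := by
          rw [mul_div_assoc]
      _ ≤ ENNReal.ofReal (r ^ k) *
          ((ENNReal.ofReal ((γ * ((k : ℝ) + 2)) ^ (2 * n)) * VB *
            ENNReal.ofReal (2 * (γ * ((k : ℝ) + 2)) ^ 2)) * (M / c₀)) := by
          gcongr
      _ = (ENNReal.ofReal (r ^ k) * ENNReal.ofReal ((γ * ((k : ℝ) + 2)) ^ (2 * n)) *
            ENNReal.ofReal (2 * (γ * ((k : ℝ) + 2)) ^ 2)) * (VB * (M / c₀)) := by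
          ring
      _ = ENNReal.ofReal (g k) * (VB * (M / c₀)) := by
          simp only [hg]
          rw [ENNReal.ofReal_mul (pow_nonneg hr0.le k),
            ENNReal.ofReal_mul (pow_nonneg hγk (2 * n))]
          generalize ENNReal.ofReal (r ^ k) = a1
          generalize ENNReal.ofReal ((γ * ((k : ℝ) + 2)) ^ (2 * n)) = a2
          generalize ENNReal.ofReal (2 * (γ * ((k : ℝ) + 2)) ^ 2) = a3
          ring
  have hfin : (VB * (M / c₀)) ≠ ⊤ := by
    apply ENNReal.mul_ne_top hVBtop
    exact (ENNReal.div_lt_top hMtop hc₀0).ne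
  calc ∫⁻ z, ENNReal.ofReal (Real.exp (-s * dH x z ^ 4)) ∂μ
      ≤ ∑' k : ℕ, ENNReal.ofReal (r ^ k) * μ (ballH x ((k : ℝ) + 1)) := step1
    _ ≤ ∑' k : ℕ, ENNReal.ofReal (g k) * (VB * (M / c₀)) := ENNReal.tsum_le_tsum hterm
    _ = (∑' k : ℕ, ENNReal.ofReal (g k)) * (VB * (M / c₀)) := ENNReal.tsum_mul_right
    _ = ENNReal.ofReal (∑' k, g k) * (VB * (M / c₀)) := by
        rw [ENNReal.ofReal_tsum_of_nonneg hgnn hgsum]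
    _ < ⊤ := ENNReal.mul_lt_top ENNReal.ofReal_lt_top (lt_top_iff_ne_top.2 hfin)

end HeisAux

namespace HeisAux

variable {n : ℕ}

lemma rpow_quarter_pow {a : ℝ} (ha : 0 ≤ a) : (a ^ ((1:ℝ)/4)) ^ 4 = a := by
  rw [← Real.rpow_natCast (a ^ ((1:ℝ)/4)) 4, ← Real.rpow_mul ha]
  norm_num

lemma continuous_exp_dH (x : Heis n) (s : ℝ) :
    Continuous (fun z : Heis n => Real.exp (-s * dH x z ^ 4)) :=
  Real.continuous_exp.comp (continuous_const.mul ((continuous_dH_left x).pow 4))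

lemma exp_level_set (x : Heis n) {s t : ℝ} (hs : 0 < s) (ht0 : 0 < t) (ht1 : t < 1) :
    {z : Heis n | t ≤ Real.exp (-s * dH x z ^ 4)} =
      ballH x ((-Real.log t / s) ^ ((1:ℝ)/4)) := by
  have hL : 0 < -Real.log t := by
    have := Real.log_neg ht0 ht1
    linarith
  have hb : 0 ≤ -Real.log t / s := by positivity
  set ρ := (-Real.log t / s) ^ ((1:ℝ)/4) with hρ
  have hρ0 : 0 ≤ ρ := Real.rpow_nonneg hb _
  have hρ4 : ρ ^ 4 = -Real.log t / s := rpow_quarter_pow hb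
  ext z
  rw [mem_setOf_eq, mem_ballH_iff]
  rw [← Real.log_le_iff_le_exp ht0]
  constructor
  · intro h
    have h2 : dH x z ^ 4 ≤ -Real.log t / s := by
      rw [le_div_iff₀ hs]
      nlinarith
    rw [← pow_le_pow_iff_left₀ (dH_nonneg x z) hρ0 (n := 4) (by norm_num), hρ4]
    exact h2
  · intro h
    have h2 : dH x z ^ 4 ≤ ρ ^ 4 := pow_le_pow_left₀ (dH_nonneg x z) h 4
    rw [hρ4, le_div_iff₀ hs] at h2
    nlinarith [h2]

lemma lint_exp_eq_on_supp {μ : Measure (Heis n)} (hud : UniformlyDistributed μ)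
    {s : ℝ} (hs : 0 < s) {x y : Heis n} (hx : x ∈ suppH μ) (hy : y ∈ suppH μ) :
    ∫⁻ z, ENNReal.ofReal (Real.exp (-s * dH x z ^ 4)) ∂μ =
      ∫⁻ z, ENNReal.ofReal (Real.exp (-s * dH y z ^ 4)) ∂μ := by
  have hlc : ∀ c : Heis n, ∫⁻ z, ENNReal.ofReal (Real.exp (-s * dH c z ^ 4)) ∂μ =
      ∫⁻ t in Ioi (0:ℝ), μ {z | t ≤ Real.exp (-s * dH c z ^ 4)} := by
    intro c
    exact lintegral_eq_lintegral_meas_le μ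
      (Filter.Eventually.of_forall fun z => Real.exp_nonneg _)
      (continuous_exp_dH c s).measurable.aemeasurable
  rw [hlc x, hlc y]
  apply lintegral_congr_ae
  have h1 : ∀ᵐ t : ℝ ∂(volume.restrict (Ioi 0)), t ≠ 1 := by
    apply ae_restrict_of_ae
    rw [ae_iff]
    have : {t : ℝ | ¬ t ≠ 1} = {1} := by ext t; simp
    rw [this, Real.volume_singleton]
  filter_upwards [h1, ae_restrict_mem measurableSet_Ioi] with t ht1 htpos
  rw [mem_Ioi] at htpos
  rcases lt_or_gt_of_ne ht1 with hlt | hgt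
  · rw [exp_level_set x hs htpos hlt, exp_level_set y hs htpos hlt]
    have hL : 0 < -Real.log t := by
      have := Real.log_neg htpos hlt
      linarith
    exact hud x hx y hy _ (Real.rpow_pos_of_pos (by positivity) _)
  · have hempty : ∀ c : Heis n, {z : Heis n | t ≤ Real.exp (-s * dH c z ^ 4)} = ∅ := by
      intro c
      ext z
      simp only [mem_setOf_eq, mem_empty_iff_false, iff_false, not_le]
      calc Real.exp (-s * dH c z ^ 4) ≤ 1 := by
            rw [← Real.exp_zero]
            apply Real.exp_le_exp.2
            have := dH_nonneg c z
            nlinarith [pow_nonneg (dH_nonneg c z) 4]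
        _ < t := hgt
    rw [hempty x, hempty y]

lemma integrable_exp_dH {μ : Measure (Heis n)} [μ.Regular] (hud : UniformlyDistributed μ)
    {x₀ : Heis n} (hx₀ : x₀ ∈ suppH μ) (x : Heis n) {s : ℝ} (hs : 0 < s) :
    Integrable (fun z : Heis n => Real.exp (-s * dH x z ^ 4)) μ := by
  constructor
  · exact (continuous_exp_dH x s).aestronglyMeasurable
  · rw [hasFiniteIntegral_iff_ofReal (Filter.Eventually.of_forall fun z => Real.exp_nonneg _)]
    exact lint_exp_lt_top hud hx₀ x s hs

lemma integral_exp_eq_on_supp {μ : Measure (Heis n)} (hud : UniformlyDistributed μ)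
    {s : ℝ} (hs : 0 < s) {x y : Heis n} (hx : x ∈ suppH μ) (hy : y ∈ suppH μ) :
    ∫ z, Real.exp (-s * dH x z ^ 4) ∂μ = ∫ z, Real.exp (-s * dH y z ^ 4) ∂μ := by
  rw [integral_eq_lintegral_of_nonneg_ae
      (Filter.Eventually.of_forall fun z => Real.exp_nonneg _)
      (continuous_exp_dH x s).aestronglyMeasurable,
    integral_eq_lintegral_of_nonneg_ae
      (Filter.Eventually.of_forall fun z => Real.exp_nonneg _)
      (continuous_exp_dH y s).aestronglyMeasurable,
    lint_exp_eq_on_supp hud hs hx hy]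

end HeisAux

open HeisAux in
/-- For a nonzero uniformly distributed measure `μ` on `(ℍⁿ, d_H)` with `supp μ ≠ ℍⁿ` and
`x₀ ∈ supp μ`: the integrals `∫ exp(-s d_H(x,z)⁴) dμ(z)` are finite, they do not depend on
`x ∈ supp μ` (so `F(x,s) = ∫ (exp(-s d_H(x,z)⁴) - exp(-s d_H(x₀,z)⁴)) dμ(z)` is well
defined), and `supp μ = ⋂_{s>0} {x : F(x,s) = 0}`. -/
theorem statement5 (n : ℕ) (μ : Measure (Heis n)) [μ.Regular] (hμ : μ ≠ 0)
    (hud : UniformlyDistributed μ) (hns : suppH μ ≠ Set.univ)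
    (x₀ : Heis n) (hx₀ : x₀ ∈ suppH μ) :
    (∀ x : Heis n, ∀ s : ℝ, 0 < s →
      ∫⁻ z, ENNReal.ofReal (Real.exp (-s * dH x z ^ 4)) ∂μ < ⊤) ∧
    (∀ s : ℝ, 0 < s → ∀ x ∈ suppH μ, ∀ y ∈ suppH μ,
      ∫ z, Real.exp (-s * dH x z ^ 4) ∂μ = ∫ z, Real.exp (-s * dH y z ^ 4) ∂μ) ∧
    suppH μ = ⋂ (s : ℝ) (_ : 0 < s),
      {x : Heis n |
        ∫ z, (Real.exp (-s * dH x z ^ 4) - Real.exp (-s * dH x₀ z ^ 4)) ∂μ = 0} := by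
  refine ⟨fun x s hs => HeisAux.lint_exp_lt_top hud hx₀ x s hs,
    fun s hs x hx y hy => HeisAux.integral_exp_eq_on_supp hud hs hx hy, ?_⟩
  apply Set.Subset.antisymm
  · intro x hx
    simp only [mem_iInter, mem_setOf_eq]
    intro s hs
    rw [integral_sub (HeisAux.integrable_exp_dH hud hx₀ x hs)
      (HeisAux.integrable_exp_dH hud hx₀ x₀ hs),
      HeisAux.integral_exp_eq_on_supp hud hs hx hx₀, sub_self]
  · intro x hxmem
    by_contra hxs
    rw [HeisAux.not_mem_suppH_iff] at hxs
    obtain ⟨r, hr, h0⟩ := hxs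
    set C := ∫ z, Real.exp (-(1:ℝ) * dH x z ^ 4) ∂μ with hC
    have hC0 : 0 ≤ C := integral_nonneg fun z => Real.exp_nonneg _
    set ρ := min (r / 2) 1 with hρdef
    have hρpos : 0 < ρ := lt_min (by linarith) one_pos
    have hρle : ρ ≤ r / 2 := min_le_left _ _
    have hm_pos_e : 0 < μ (ballH x₀ ρ) := hx₀ ρ hρpos
    have hm_fin : μ (ballH x₀ ρ) < ⊤ := (HeisAux.isCompact_ballH _ _).measure_lt_top
    set m := (μ (ballH x₀ ρ)).toReal with hm
    have hm0 : 0 < m := ENNReal.toReal_pos hm_pos_e.ne' hm_fin.ne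
    set D := (7 / 16) * r ^ 4 * m with hD
    have hDpos : 0 < D := by positivity
    set s := max 2 (C / D + 1) with hsdef
    have hs2 : (2:ℝ) ≤ s := le_max_left _ _
    have hspos : (0:ℝ) < s := by linarith
    have hsD : C < s * D := by
      have h1 : C / D + 1 ≤ s := le_max_right _ _
      have h2 : C / D < s := by linarith
      calc C = (C / D) * D := by field_simp
        _ < s * D := mul_lt_mul_of_pos_right h2 hDpos
    have hkey : C < Real.exp (s * ((7 / 16) * r ^ 4)) * m := by
      have h3 : s * ((7 / 16) * r ^ 4) + 1 ≤ Real.exp (s * ((7 / 16) * r ^ 4)) :=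
        Real.add_one_le_exp _
    
      nlinarith [hsD, h3, hm0]
    have hInt1 : Integrable (fun z => Real.exp (-s * dH x z ^ 4)) μ :=
      HeisAux.integrable_exp_dH hud hx₀ x hspos
    have hIntC : Integrable (fun z => Real.exp (-(1:ℝ) * dH x z ^ 4)) μ :=
      HeisAux.integrable_exp_dH hud hx₀ x (by norm_num)
    have hIntg : Integrable (fun z => Real.exp (-s * dH x₀ z ^ 4)) μ :=
      HeisAux.integrable_exp_dH hud hx₀ x₀ hspos
    have hae : ∀ᵐ z ∂μ, r < dH x z := by
      rw [ae_iff]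
      simp only [not_lt]
      exact h0
    have hbound : ∀ᵐ z ∂μ, Real.exp (-s * dH x z ^ 4) ≤
        Real.exp (-(s / 2) * r ^ 4) * Real.exp (-(1:ℝ) * dH x z ^ 4) := by
      filter_upwards [hae] with z hz
      rw [← Real.exp_add]
      apply Real.exp_le_exp.2
      have hd4 : r ^ 4 ≤ dH x z ^ 4 := pow_le_pow_left₀ hr.le hz.le 4
      nlinarith [hd4, pow_nonneg (HeisAux.dH_nonneg x z) 4,
        mul_le_mul_of_nonneg_left hd4 (by linarith : (0:ℝ) ≤ s / 2),
        mul_le_mul_of_nonneg_right (by linarith : (1:ℝ) ≤ s / 2)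
          (pow_nonneg (HeisAux.dH_nonneg x z) 4)]
    have ha : ∫ z, Real.exp (-s * dH x z ^ 4) ∂μ ≤ Real.exp (-(s / 2) * r ^ 4) * C := by
      calc ∫ z, Real.exp (-s * dH x z ^ 4) ∂μ
          ≤ ∫ z, Real.exp (-(s / 2) * r ^ 4) * Real.exp (-(1:ℝ) * dH x z ^ 4) ∂μ :=
            integral_mono_ae hInt1 (hIntC.const_mul _) hbound
        _ = Real.exp (-(s / 2) * r ^ 4) * C := by rw [integral_const_mul]
    have hb : Real.exp (-s * ρ ^ 4) * m ≤ ∫ z, Real.exp (-s * dH x₀ z ^ 4) ∂μ := by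
      have h1 : Real.exp (-s * ρ ^ 4) * m ≤ ∫ z in ballH x₀ ρ, Real.exp (-s * dH x₀ z ^ 4) ∂μ := by
        apply setIntegral_ge_of_const_le_real (HeisAux.measurableSet_ballH _ _) hm_fin.ne
        · intro z hz
          apply Real.exp_le_exp.2
          have h2 : dH x₀ z ^ 4 ≤ ρ ^ 4 :=
            pow_le_pow_left₀ (HeisAux.dH_nonneg _ _) (HeisAux.mem_ballH_iff.1 hz) 4
          nlinarith
        · exact hIntg.integrableOn
      exact h1.trans (setIntegral_le_integral hIntg
        (Filter.Eventually.of_forall fun z => Real.exp_nonneg _))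
    have hmid : Real.exp (-(s / 2) * r ^ 4) * C < Real.exp (-s * ρ ^ 4) * m := by
      have hρ4 : ρ ^ 4 ≤ r ^ 4 / 16 := by
        have h4 := pow_le_pow_left₀ hρpos.le hρle 4
        nlinarith
      have h1 : Real.exp (-s * (r ^ 4 / 16)) ≤ Real.exp (-s * ρ ^ 4) :=
        Real.exp_le_exp.2 (by nlinarith)
      have h2 : Real.exp (-(s / 2) * r ^ 4) * C <
          Real.exp (-(s / 2) * r ^ 4) * (Real.exp (s * ((7 / 16) * r ^ 4)) * m) :=
        mul_lt_mul_of_pos_left hkey (Real.exp_pos _)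
      have h3 : Real.exp (-(s / 2) * r ^ 4) * (Real.exp (s * ((7 / 16) * r ^ 4)) * m) =
          Real.exp (-s * (r ^ 4 / 16)) * m := by
        rw [← mul_assoc, ← Real.exp_add]
        congr 2
        ring
      rw [h3] at h2
      exact h2.trans_le (mul_le_mul_of_nonneg_right h1 hm0.le)
    have hFs : ∫ z, (Real.exp (-s * dH x z ^ 4) - Real.exp (-s * dH x₀ z ^ 4)) ∂μ = 0 := by
      simp only [mem_iInter, mem_setOf_eq] at hxmem
      exact hxmem s hspos
    rw [integral_sub hInt1 hIntg] at hFs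
    have hlt : ∫ z, Real.exp (-s * dH x z ^ 4) ∂μ < ∫ z, Real.exp (-s * dH x₀ z ^ 4) ∂μ :=
      lt_of_le_of_lt ha (lt_of_lt_of_le hmid hb)
    linarith [hFs, hlt]
end
end

section
/- Let μ be a nonzero uniformly distributed measure on (ℍ^n, d_H) whose support is bounded. Then supp(μ) is an algebraic variety: there exist finitely many polynomial functions p₁, …, p_m : ℝ^{2n+1} → ℝ such that supp(μ) = {x ∈ ℝ^{2n+1} : p₁(x) = ⋯ = p_m(x) = 0}. -/
open MeasureTheory Set Filter ENNReal NNReal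

noncomputable section

/-- The coordinates of a point of `ℍⁿ` as a vector in `ℝ^{2n+1}`. -/
def coords {n : ℕ} (x : Heis n) : Fin (2 * n + 1) → ℝ :=
  fun j => if h : (j : ℕ) < 2 * n then x.1 ⟨j, h⟩ else x.2

open Topology

namespace Stmt12

variable {n : ℕ}

/-- embedding of `Fin (2n)` into `Fin (2n+1)`. -/
def ii {n : ℕ} (i : Fin (2 * n)) : Fin (2 * n + 1) := ⟨i.1, by omega⟩

def lastIdx (n : ℕ) : Fin (2 * n + 1) := ⟨2 * n, by omega⟩

def jdx {n : ℕ} (j : Fin n) : Fin (2 * n) := ⟨j.1, by have := j.isLt; omega⟩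
def jnx {n : ℕ} (j : Fin n) : Fin (2 * n) := ⟨j.1 + n, by have := j.isLt; omega⟩

lemma coords_ii (x : Heis n) (i : Fin (2 * n)) : coords x (ii i) = x.1 i := by
  simp only [coords, ii]
  exact dif_pos i.isLt

lemma coords_last (x : Heis n) : coords x (lastIdx n) = x.2 := by
  simp [coords, lastIdx]

lemma symp_eq (x y : EuclideanSpace ℝ (Fin (2 * n))) :
    symp x y = -2 * ∑ j : Fin n, (x (jdx j) * y (jnx j) - x (jnx j) * y (jdx j)) := rfl

lemma symp_neg_left (x y : EuclideanSpace ℝ (Fin (2 * n))) : symp (-x) y = -symp x y := by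
  simp only [symp_eq, PiLp.neg_apply, neg_mul, Finset.mul_sum, ← Finset.sum_neg_distrib]
  exact Finset.sum_congr rfl fun j _ => by ring

/-- The 4th power of the Korányi distance, a polynomial function of the coordinates. -/
def gq {n : ℕ} (x y : Heis n) : ℝ :=
  (∑ i : Fin (2 * n), (y.1 i - x.1 i) ^ 2) ^ 2 + (y.2 - x.2 - symp x.1 y.1) ^ 2

lemma gq_nonneg (x y : Heis n) : 0 ≤ gq x y := by unfold gq; positivity

lemma gq_self (x : Heis n) : gq x x = 0 := by
  have h : symp x.1 x.1 = 0 := by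
    rw [symp_eq]
    rw [Finset.sum_eq_zero fun j _ => by ring]
    ring
  simp [gq, h]

lemma dH_eq (x y : Heis n) : dH x y = gq x y ^ ((1 : ℝ) / 4) := by
  have h1 : (hmul (hinv x) y).1 = -x.1 + y.1 := rfl
  have h2 : (hmul (hinv x) y).2 = -x.2 + y.2 + symp (-x.1) y.1 := rfl
  rw [dH, KNorm, h1, h2]
  congr 1
  have hnorm : ‖-x.1 + y.1‖ ^ 2 = ∑ i : Fin (2 * n), (y.1 i - x.1 i) ^ 2 := by
    rw [EuclideanSpace.norm_eq]
    rw [Real.sq_sqrt (by positivity)]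
    exact Finset.sum_congr rfl fun i _ => by
      simp [PiLp.add_apply, PiLp.neg_apply, Real.norm_eq_abs, sq_abs]
      ring_nf
  have h4 : ‖-x.1 + y.1‖ ^ 4 = (∑ i : Fin (2 * n), (y.1 i - x.1 i) ^ 2) ^ 2 := by
    rw [show (4 : ℕ) = 2 * 2 by norm_num, pow_mul, hnorm]
  rw [h4, gq, symp_neg_left]
  ring

lemma dH_nonneg (x y : Heis n) : 0 ≤ dH x y := by
  rw [dH_eq]; exact Real.rpow_nonneg (gq_nonneg x y) _

lemma dH_pow_four (x y : Heis n) : dH x y ^ 4 = gq x y := by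
  rw [dH_eq, ← Real.rpow_natCast (gq x y ^ ((1:ℝ)/4)) 4, ← Real.rpow_mul (gq_nonneg x y)]
  norm_num

lemma dH_self (x : Heis n) : dH x x = 0 := by
  rw [dH_eq, gq_self]
  simp [Real.zero_rpow]

lemma ballH_eq (x : Heis n) {r : ℝ} (hr : 0 ≤ r) :
    ballH x r = {y | gq x y ≤ r ^ 4} := by
  ext y
  simp only [ballH, mem_setOf_eq]
  constructor
  · intro h
    rw [← dH_pow_four]
    exact pow_le_pow_left₀ (dH_nonneg x y) h 4
  · intro h
    refine le_of_pow_le_pow_left₀ (n := 4) (by norm_num) hr ?_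
    rw [dH_pow_four]; exact h


lemma cont_coord (i : Fin (2 * n)) : Continuous fun y : Heis n => y.1 i :=
  (EuclideanSpace.proj i).continuous.comp continuous_fst

lemma cont_coords (j : Fin (2 * n + 1)) : Continuous fun y : Heis n => coords y j := by
  by_cases h : (j : ℕ) < 2 * n
  · simp only [coords, dif_pos h]
    exact cont_coord _
  · simp only [coords, dif_neg h]
    exact continuous_snd

lemma cont_symp (x : Heis n) : Continuous fun y : Heis n => symp x.1 y.1 := by
  simp only [symp_eq]
  refine continuous_const.mul (continuous_finset_sum _ fun j _ => ?_)
  exact (continuous_const.mul (cont_coord (jnx j))).sub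
    (continuous_const.mul (cont_coord (jdx j)))

lemma cont_gq (x : Heis n) : Continuous (gq x) := by
  unfold gq
  refine Continuous.add (Continuous.pow ?_ 2) (Continuous.pow ?_ 2)
  · exact continuous_finset_sum _ fun i _ => ((cont_coord i).sub continuous_const).pow 2
  · exact (continuous_snd.sub continuous_const).sub (cont_symp x)

lemma cont_dH (x : Heis n) : Continuous (dH x) := by
  have : (dH x) = fun y => gq x y ^ ((1:ℝ)/4) := funext fun y => dH_eq x y
  rw [this]
  exact (cont_gq x).rpow_const fun y => Or.inr (by norm_num)

open MvPolynomial in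
/-- The polynomial in `x`-variables (`Sum.inl`) and `y`-variables (`Sum.inr`)
representing `gq x y`. -/
def Dp (n : ℕ) : MvPolynomial (Fin (2 * n + 1) ⊕ Fin (2 * n + 1)) ℝ :=
  (∑ i : Fin (2 * n), (X (Sum.inr (ii i)) - X (Sum.inl (ii i))) ^ 2) ^ 2 +
  (X (Sum.inr (lastIdx n)) - X (Sum.inl (lastIdx n)) -
    C (-2) * ∑ j : Fin n,
      (X (Sum.inl (ii (jdx j))) * X (Sum.inr (ii (jnx j))) -
       X (Sum.inl (ii (jnx j))) * X (Sum.inr (ii (jdx j))))) ^ 2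

open MvPolynomial in
lemma eval_Dp (x y : Heis n) :
    MvPolynomial.eval (Sum.elim (coords x) (coords y)) (Dp n) = gq x y := by
  simp only [Dp, map_add, map_pow, map_sub, map_mul, map_sum, eval_X, eval_C,
    Sum.elim_inl, Sum.elim_inr, coords_ii, coords_last, gq, symp_eq]

open MvPolynomial in
lemma eval_Dp_pow (x y : Heis n) (k : ℕ) :
    MvPolynomial.eval (Sum.elim (coords x) (coords y)) (Dp n ^ k) = gq x y ^ k := by
  rw [map_pow, eval_Dp]

open MvPolynomial in
lemma cont_evalxy (x : Heis n) (Q : MvPolynomial (Fin (2 * n + 1) ⊕ Fin (2 * n + 1)) ℝ) :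
    Continuous fun y : Heis n => MvPolynomial.eval (Sum.elim (coords x) (coords y)) Q := by
  induction Q using MvPolynomial.induction_on with
  | C a => simpa using continuous_const
  | add p q hp hq => simp only [map_add]; exact hp.add hq
  | mul_X p i hp =>
    simp only [map_mul, eval_X]
    cases i with
    | inl j => exact hp.mul continuous_const
    | inr j => exact hp.mul (cont_coords j)


section Meas

variable {n : ℕ} {μ : Measure (Heis n)}

lemma measurableSet_gq_le (x : Heis n) (c : ℝ) : MeasurableSet {y | gq x y ≤ c} :=
  (cont_gq x).measurable measurableSet_Iic

lemma compl_suppH_null (μ : Measure (Heis n)) : μ (suppH μ)ᶜ = 0 := by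
  apply measure_null_of_locally_null
  intro x hx
  rw [mem_compl_iff, suppH, mem_setOf_eq] at hx
  push_neg at hx
  obtain ⟨r, hr, h0⟩ := hx
  have h0' : μ (ballH x r) = 0 := le_antisymm h0 zero_le
  refine ⟨{y | dH x y < r}, ?_, measure_mono_null (show {y | dH x y < r} ⊆ ballH x r from fun y hy => (le_of_lt (hy : dH x y < r) : dH x y ≤ r)) h0'⟩
  apply mem_nhdsWithin_of_mem_nhds
  have hopen : IsOpen {y | dH x y < r} := isOpen_lt (cont_dH x) continuous_const
  exact hopen.mem_nhds (by simp only [mem_setOf_eq, dH_self]; exact hr)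

lemma null_compl_K (μ : Measure (Heis n)) : μ (closure (suppH μ))ᶜ = 0 :=
  measure_mono_null (compl_subset_compl.2 subset_closure) (compl_suppH_null μ)

lemma ae_mem_K (μ : Measure (Heis n)) : ∀ᵐ y ∂μ, y ∈ closure (suppH μ) := by
  rw [ae_iff]
  exact null_compl_K μ

lemma isCompact_K (hb : Bornology.IsBounded (suppH μ)) : IsCompact (closure (suppH μ)) :=
  Metric.isCompact_of_isClosed_isBounded isClosed_closure hb.closure

lemma finiteMeasure (hc : IsFiniteMeasureOnCompacts μ) (hb : Bornology.IsBounded (suppH μ)) :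
    IsFiniteMeasure μ := by
  constructor
  calc μ univ = μ (closure (suppH μ) ∪ (closure (suppH μ))ᶜ) := by rw [union_compl_self]
    _ ≤ μ (closure (suppH μ)) + μ (closure (suppH μ))ᶜ := measure_union_le _ _
    _ = μ (closure (suppH μ)) := by rw [null_compl_K μ, add_zero]
    _ < ⊤ := (isCompact_K hb).measure_lt_top

lemma integrable_of_continuous [IsFiniteMeasure μ]
    (hK : IsCompact (closure (suppH μ))) {f : Heis n → ℝ} (hf : Continuous f) :
    Integrable f μ := by
  obtain ⟨C, hC⟩ := hK.exists_bound_of_continuousOn hf.continuousOn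
  exact (integrable_const C).mono' hf.aestronglyMeasurable
    ((ae_mem_K μ).mono fun y hy => hC y hy)

lemma gq_le_measure_eq (hud : UniformlyDistributed μ) {x z : Heis n}
    (hx : x ∈ suppH μ) (hz : z ∈ suppH μ) {a : ℝ} (ha : 0 < a) :
    μ {y | gq x y ≤ a} = μ {y | gq z y ≤ a} := by
  have hr : (0:ℝ) < a ^ ((1:ℝ)/4) := Real.rpow_pos_of_pos ha _
  have hpow : (a ^ ((1:ℝ)/4)) ^ (4:ℕ) = a := by
    rw [← Real.rpow_natCast (a ^ ((1:ℝ)/4)) 4, ← Real.rpow_mul ha.le]; norm_num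
  have h1 : {y | gq x y ≤ a} = ballH x (a ^ ((1:ℝ)/4)) := by rw [ballH_eq x hr.le, hpow]
  have h2 : {y | gq z y ≤ a} = ballH z (a ^ ((1:ℝ)/4)) := by rw [ballH_eq z hr.le, hpow]
  rw [h1, h2]
  exact hud x hx z hz _ hr

lemma map_gq_eq [IsFiniteMeasure μ] (hud : UniformlyDistributed μ) {x z : Heis n}
    (hx : x ∈ suppH μ) (hz : z ∈ suppH μ) :
    Measure.map (gq x) μ = Measure.map (gq z) μ := by
  haveI : IsFiniteMeasure (Measure.map (gq x) μ) :=
    Measure.isFiniteMeasure_map μ _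
  refine Measure.ext_of_Iic _ _ fun a => ?_
  rw [Measure.map_apply (cont_gq x).measurable measurableSet_Iic,
      Measure.map_apply (cont_gq z).measurable measurableSet_Iic]
  have hpre : ∀ w : Heis n, gq w ⁻¹' Iic a = {y | gq w y ≤ a} := fun _ => rfl
  rcases lt_trichotomy a 0 with h | h | h
  · have hemp : ∀ w : Heis n, gq w ⁻¹' Iic a = ∅ := fun w =>
      eq_empty_iff_forall_notMem.2 fun y hy =>
        absurd (lt_of_le_of_lt (hy : gq w y ≤ a) h) (not_lt.2 (gq_nonneg w y))
    rw [hemp x, hemp z]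
  · subst h
    have hlim0 : Tendsto (fun m : ℕ => 1/((m:ℝ)+1)) atTop (𝓝 0) :=
      tendsto_one_div_add_atTop_nhds_zero_nat
    have hiInter : ∀ w : Heis n, (⋂ m : ℕ, {y | gq w y ≤ 1/((m:ℝ)+1)}) = gq w ⁻¹' Iic 0 := by
      intro w
      ext y
      simp only [mem_iInter, mem_setOf_eq, mem_preimage, mem_Iic]
      constructor
      · intro hy
        exact ge_of_tendsto hlim0 (Eventually.of_forall hy)
      · intro hy m
        exact hy.trans (by positivity)
    have hmono : ∀ w : Heis n, Antitone fun m : ℕ => {y : Heis n | gq w y ≤ 1/((m:ℝ)+1)} := by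
      intro w m m' hmm' y hy
      simp only [mem_setOf_eq] at hy ⊢
      refine le_trans hy ?_
      apply one_div_le_one_div_of_le (by positivity)
      have : (m:ℝ) ≤ (m':ℝ) := Nat.cast_le.2 hmm'
      linarith
    have hlimx := tendsto_measure_iInter_atTop
      (s := fun m : ℕ => {y : Heis n | gq x y ≤ 1/((m:ℝ)+1)})
      (fun m => (measurableSet_gq_le x (1/((m:ℝ)+1))).nullMeasurableSet) (hmono x)
      ⟨0, measure_ne_top μ _⟩
    have hlimz := tendsto_measure_iInter_atTop
      (s := fun m : ℕ => {y : Heis n | gq z y ≤ 1/((m:ℝ)+1)})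
      (fun m => (measurableSet_gq_le z (1/((m:ℝ)+1))).nullMeasurableSet) (hmono z)
      ⟨0, measure_ne_top μ _⟩
    rw [hiInter x] at hlimx
    rw [hiInter z] at hlimz
    have heq : (fun m : ℕ => μ {y | gq x y ≤ 1/((m:ℝ)+1)})
        = fun m : ℕ => μ {y | gq z y ≤ 1/((m:ℝ)+1)} :=
      funext fun m => gq_le_measure_eq hud hx hz (by positivity)
    refine tendsto_nhds_unique ?_ hlimz
    have : (μ ∘ fun m : ℕ => {y : Heis n | gq x y ≤ 1/((m:ℝ)+1)})
        = (μ ∘ fun m : ℕ => {y : Heis n | gq z y ≤ 1/((m:ℝ)+1)}) := by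
      funext m
      exact gq_le_measure_eq hud hx hz (by positivity)
    rw [← this]
    exact hlimx
  · rw [hpre x, hpre z]
    exact gq_le_measure_eq hud hx hz h

lemma moment_eq [IsFiniteMeasure μ] (hud : UniformlyDistributed μ) {x z : Heis n}
    (hx : x ∈ suppH μ) (hz : z ∈ suppH μ) (k : ℕ) :
    ∫ y, gq x y ^ k ∂μ = ∫ y, gq z y ^ k ∂μ := by
  have hfm : ∀ w : Heis n, AEMeasurable (gq w) μ := fun w => (cont_gq w).measurable.aemeasurable
  have h1 : ∫ t, t ^ k ∂(Measure.map (gq x) μ) = ∫ y, gq x y ^ k ∂μ :=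
    integral_map (hfm x) (measurable_id.pow_const k).aestronglyMeasurable
  have h2 : ∫ t, t ^ k ∂(Measure.map (gq z) μ) = ∫ y, gq z y ^ k ∂μ :=
    integral_map (hfm z) (measurable_id.pow_const k).aestronglyMeasurable
  rw [← h1, ← h2, map_gq_eq hud hx hz]


open MvPolynomial in
lemma exists_poly [IsFiniteMeasure μ] (hK : IsCompact (closure (suppH μ)))
    (Q : MvPolynomial (Fin (2 * n + 1) ⊕ Fin (2 * n + 1)) ℝ) :
    ∃ P : MvPolynomial (Fin (2 * n + 1)) ℝ, ∀ x : Heis n,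
      MvPolynomial.eval (coords x) P
        = ∫ y, MvPolynomial.eval (Sum.elim (coords x) (coords y)) Q ∂μ := by
  classical
  refine ⟨∑ m ∈ Q.support,
      monomial (Finsupp.equivFunOnFinite.symm fun i => m (Sum.inl i))
        (Q.coeff m * ∫ y, ∏ i : Fin (2 * n + 1), coords y i ^ m (Sum.inr i) ∂μ),
    fun x => ?_⟩
  have hcy : ∀ m : (Fin (2 * n + 1) ⊕ Fin (2 * n + 1)) →₀ ℕ,
      Continuous fun y : Heis n => ∏ i : Fin (2 * n + 1), coords y i ^ m (Sum.inr i) :=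
    fun m => continuous_finset_prod _ fun i _ => (cont_coords i).pow _
  have hint : ∀ m : (Fin (2 * n + 1) ⊕ Fin (2 * n + 1)) →₀ ℕ,
      Integrable (fun y : Heis n => ∏ i : Fin (2 * n + 1), coords y i ^ m (Sum.inr i)) μ :=
    fun m => integrable_of_continuous hK (hcy m)
  have hpt : ∀ y : Heis n, MvPolynomial.eval (Sum.elim (coords x) (coords y)) Q
      = ∑ m ∈ Q.support, (Q.coeff m * ∏ i : Fin (2 * n + 1), coords x i ^ m (Sum.inl i))
          * ∏ i : Fin (2 * n + 1), coords y i ^ m (Sum.inr i) := by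
    intro y
    conv_lhs => rw [Q.as_sum]
    rw [map_sum]
    refine Finset.sum_congr rfl fun m _ => ?_
    rw [eval_monomial, Finsupp.prod_pow, Fintype.prod_sum_type]
    simp only [Sum.elim_inl, Sum.elim_inr]
    ring
  have hRHS : ∫ y, MvPolynomial.eval (Sum.elim (coords x) (coords y)) Q ∂μ
      = ∑ m ∈ Q.support, (Q.coeff m * ∏ i : Fin (2 * n + 1), coords x i ^ m (Sum.inl i))
          * ∫ y, ∏ i : Fin (2 * n + 1), coords y i ^ m (Sum.inr i) ∂μ := by
    rw [show (fun y : Heis n => MvPolynomial.eval (Sum.elim (coords x) (coords y)) Q)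
        = fun y => ∑ m ∈ Q.support,
            (Q.coeff m * ∏ i : Fin (2 * n + 1), coords x i ^ m (Sum.inl i))
            * ∏ i : Fin (2 * n + 1), coords y i ^ m (Sum.inr i) from funext hpt]
    rw [integral_finset_sum _ fun m _ => (hint m).const_mul _]
    exact Finset.sum_congr rfl fun m _ => integral_const_mul _ _
  rw [hRHS, map_sum]
  refine Finset.sum_congr rfl fun m _ => ?_
  rw [eval_monomial, Finsupp.prod_pow]
  simp only [Finsupp.coe_equivFunOnFinite_symm]
  ring


/-- The piecewise-linear approximations to the indicator of `Iic c`. -/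
def clamp (c : ℝ) (m : ℕ) (t : ℝ) : ℝ := max 0 (min 1 (((m:ℝ) + 1) * (c - t) + 1))

lemma clamp_cont (c : ℝ) (m : ℕ) {x : Heis n} : Continuous fun y => clamp c m (gq x y) := by
  have h1 : Continuous fun y : Heis n => ((m:ℝ) + 1) * (c - gq x y) + 1 :=
    (continuous_const.mul (continuous_const.sub (cont_gq x))).add continuous_const
  exact continuous_const.max (continuous_const.min h1)

lemma clamp_norm_le (c : ℝ) (m : ℕ) (t : ℝ) : ‖clamp c m t‖ ≤ 1 := by
  rw [Real.norm_eq_abs, abs_of_nonneg (le_max_left _ _)]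
  exact max_le (by norm_num) (min_le_left _ _)

lemma clamp_tendsto (c t : ℝ) :
    Tendsto (fun m : ℕ => clamp c m t) atTop (𝓝 (if t ≤ c then 1 else 0)) := by
  by_cases h : t ≤ c
  · rw [if_pos h]
    have : ∀ m : ℕ, clamp c m t = 1 := by
      intro m
      have h1 : (1:ℝ) ≤ ((m:ℝ) + 1) * (c - t) + 1 := by nlinarith [Nat.cast_nonneg (α := ℝ) m]
      rw [clamp, min_eq_left h1, max_eq_right (by norm_num)]
    rw [show (fun m : ℕ => clamp c m t) = fun _ => (1:ℝ) from funext this]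
    exact tendsto_const_nhds
  · rw [if_neg h]
    push_neg at h
    have hev : ∀ᶠ m : ℕ in atTop, clamp c m t = 0 := by
      have hge := tendsto_natCast_atTop_atTop (R := ℝ) |>.eventually_ge_atTop (1 / (t - c))
      filter_upwards [hge] with m hm
      have hle : ((m:ℝ) + 1) * (c - t) + 1 ≤ 0 := by
        have h2 : (1 / (t - c)) * (t - c) ≤ ((m:ℝ) + 1) * (t - c) := by
          apply mul_le_mul_of_nonneg_right _ (by linarith)
          linarith
        rw [one_div_mul_cancel (by linarith : t - c ≠ 0)] at h2
        nlinarith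
      rw [clamp, max_eq_left]
      exact (min_le_right _ _).trans hle
    exact Tendsto.congr' (hev.mono fun m hm => hm.symm) tendsto_const_nhds

lemma clamp_integral_tendsto [IsFiniteMeasure μ] (x : Heis n) (c : ℝ) :
    Tendsto (fun m : ℕ => ∫ y, clamp c m (gq x y) ∂μ) atTop
      (𝓝 ((μ {y | gq x y ≤ c}).toReal)) := by
  have hs := measurableSet_gq_le x c
  have hlim : Tendsto (fun m : ℕ => ∫ y, clamp c m (gq x y) ∂μ) atTop
      (𝓝 (∫ y, Set.indicator {y : Heis n | gq x y ≤ c} (fun _ => (1:ℝ)) y ∂μ)) := by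
    apply tendsto_integral_of_dominated_convergence (bound := fun _ => (1:ℝ))
    · exact fun m => (clamp_cont c m).aestronglyMeasurable
    · exact integrable_const 1
    · exact fun m => Eventually.of_forall fun y => clamp_norm_le c m (gq x y)
    · refine Eventually.of_forall fun y => ?_
      rw [Set.indicator_apply]
      simpa using clamp_tendsto c (gq x y)
  rwa [integral_indicator_const (1:ℝ) hs, smul_eq_mul, mul_one] at hlim

lemma integral_comp_eq [IsFiniteMeasure μ] (hK : IsCompact (closure (suppH μ)))
    {x z : Heis n} (hmom : ∀ k : ℕ, ∫ y, gq x y ^ k ∂μ = ∫ y, gq z y ^ k ∂μ)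
    {φ : ℝ → ℝ} (hφ : Continuous φ) :
    ∫ y, φ (gq x y) ∂μ = ∫ y, φ (gq z y) ∂μ := by
  obtain ⟨M₁, hM₁⟩ := hK.exists_bound_of_continuousOn (cont_gq x).continuousOn
  obtain ⟨M₂, hM₂⟩ := hK.exists_bound_of_continuousOn (cont_gq z).continuousOn
  set M := max M₁ M₂ with hM
  have hbx : ∀ y ∈ closure (suppH μ), gq x y ∈ Icc (0:ℝ) M := fun y hy =>
    ⟨gq_nonneg x y, le_trans (le_trans (le_abs_self _) (hM₁ y hy)) (le_max_left _ _)⟩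
  have hbz : ∀ y ∈ closure (suppH μ), gq z y ∈ Icc (0:ℝ) M := fun y hy =>
    ⟨gq_nonneg z y, le_trans (le_trans (le_abs_self _) (hM₂ y hy)) (le_max_right _ _)⟩
  set A := ∫ y, φ (gq x y) ∂μ with hA
  set B := ∫ y, φ (gq z y) ∂μ with hB
  have hintφ : ∀ w : Heis n, Integrable (fun y => φ (gq w y)) μ :=
    fun w => integrable_of_continuous hK (hφ.comp (cont_gq w))
  have key : ∀ ε > 0, |A - B| ≤ ε * (2 * (μ univ).toReal) := by
    intro ε hε
    obtain ⟨p, hp⟩ := exists_polynomial_near_of_continuousOn 0 M φ hφ.continuousOn ε hε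
    have hintp : ∀ w : Heis n, Integrable (fun y => p.eval (gq w y)) μ :=
      fun w => integrable_of_continuous hK ((p.continuous_aeval.comp (cont_gq w)))
    have hpoly : ∫ y, p.eval (gq x y) ∂μ = ∫ y, p.eval (gq z y) ∂μ := by
      have hrw : ∀ w : Heis n, (fun y => p.eval (gq w y))
          = fun y => ∑ i ∈ Finset.range (p.natDegree + 1), p.coeff i * gq w y ^ i :=
        fun w => funext fun y => Polynomial.eval_eq_sum_range _
      have hinti : ∀ (w : Heis n) (i : ℕ), Integrable (fun y => p.coeff i * gq w y ^ i) μ :=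
        fun w i => (integrable_of_continuous hK ((cont_gq w).pow i)).const_mul _
      rw [hrw x, hrw z, integral_finset_sum _ fun i _ => hinti x i,
        integral_finset_sum _ fun i _ => hinti z i]
      refine Finset.sum_congr rfl fun i _ => ?_
      rw [integral_const_mul, integral_const_mul, hmom i]
    have herr : ∀ w : Heis n, (∀ y ∈ closure (suppH μ), gq w y ∈ Icc (0:ℝ) M) →
        ‖∫ y, φ (gq w y) ∂μ - ∫ y, p.eval (gq w y) ∂μ‖ ≤ ε * (μ univ).toReal := by
      intro w hw
      rw [← integral_sub (hintφ w) (hintp w)]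
      apply norm_integral_le_of_norm_le_const
      filter_upwards [ae_mem_K μ] with y hy
      have := hp (gq w y) (hw y hy)
      rw [Real.norm_eq_abs]
      rw [abs_sub_comm] at this
      exact le_of_lt this
    have h1 := herr x hbx
    have h2 := herr z hbz
    rw [Real.norm_eq_abs] at h1 h2
    rw [hpoly] at h1
    calc |A - B| = |(A - ∫ y, p.eval (gq z y) ∂μ) + (∫ y, p.eval (gq z y) ∂μ - B)| := by
          ring_nf
      _ ≤ |A - ∫ y, p.eval (gq z y) ∂μ| + |∫ y, p.eval (gq z y) ∂μ - B| := abs_add_le _ _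
      _ ≤ ε * (μ univ).toReal + ε * (μ univ).toReal := by
          refine add_le_add h1 ?_
          rw [abs_sub_comm]
          exact h2
      _ = ε * (2 * (μ univ).toReal) := by ring
  have habs : |A - B| ≤ 0 := by
    by_contra hlt
    push_neg at hlt
    set c := 2 * (μ univ).toReal with hc
    have hc0 : 0 ≤ c := by positivity
    rcases eq_or_lt_of_le hc0 with h | h
    · have := key 1 one_pos
      rw [← h, mul_zero] at this
      linarith
    · have := key (|A - B| / (2 * c)) (by positivity)
      rw [div_mul_eq_mul_div, mul_comm] at this
      have h3 : c * |A - B| / (2 * c) = |A - B| / 2 := by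
        field_simp
      rw [h3] at this
      linarith
  have := abs_nonpos_iff.mp (habs)
  linarith [abs_nonneg (A - B), sub_eq_zero.mp this]


lemma clamp_cont' (c : ℝ) (m : ℕ) : Continuous (clamp c m) :=
  continuous_const.max (continuous_const.min
    ((continuous_const.mul (continuous_const.sub continuous_id)).add continuous_const))

lemma mem_supp_of_moments [IsFiniteMeasure μ] (hK : IsCompact (closure (suppH μ)))
    {x x₀ : Heis n} (hx₀ : x₀ ∈ suppH μ)
    (hmom : ∀ k : ℕ, ∫ y, gq x y ^ k ∂μ = ∫ y, gq x₀ y ^ k ∂μ) : x ∈ suppH μ := by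
  intro r hr
  rw [ballH_eq x hr.le]
  have heqm : ∀ m : ℕ, ∫ y, clamp (r^4) m (gq x y) ∂μ = ∫ y, clamp (r^4) m (gq x₀ y) ∂μ :=
    fun m => integral_comp_eq hK hmom (clamp_cont' (r^4) m)
  have h1 := clamp_integral_tendsto (μ := μ) x (r^4)
  have h2 := clamp_integral_tendsto (μ := μ) x₀ (r^4)
  rw [show (fun m : ℕ => ∫ y, clamp (r^4) m (gq x y) ∂μ)
      = fun m : ℕ => ∫ y, clamp (r^4) m (gq x₀ y) ∂μ from funext heqm] at h1
  have htoReal := tendsto_nhds_unique h1 h2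
  have hmeq : μ {y | gq x y ≤ r^4} = μ {y | gq x₀ y ≤ r^4} :=
    (ENNReal.toReal_eq_toReal_iff' (measure_ne_top μ _) (measure_ne_top μ _)).mp htoReal
  rw [hmeq, ← ballH_eq x₀ hr.le]
  exact hx₀ r hr

end Meas

end Stmt12

/-- The support of a nonzero uniformly distributed measure on `(ℍⁿ, d_H)` with bounded
support is an algebraic variety: the common zero set of finitely many polynomials in the
coordinates of `ℝ^{2n+1}`. -/
theorem statement12 (n : ℕ) (μ : Measure (Heis n)) [μ.Regular] (hμ : μ ≠ 0)
    (hud : UniformlyDistributed μ) (hb : Bornology.IsBounded (suppH μ)) :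
    ∃ (m : ℕ) (p : Fin m → MvPolynomial (Fin (2 * n + 1)) ℝ),
      suppH μ = {x : Heis n | ∀ i, MvPolynomial.eval (coords x) (p i) = 0} := by
  classical
  haveI hfin : IsFiniteMeasure μ := Stmt12.finiteMeasure inferInstance hb
  have hK : IsCompact (closure (suppH μ)) := Stmt12.isCompact_K hb
  have hex : ∀ k : ℕ, ∃ P : MvPolynomial (Fin (2 * n + 1)) ℝ, ∀ x : Heis n,
      MvPolynomial.eval (coords x) P
        = ∫ y, MvPolynomial.eval (Sum.elim (coords x) (coords y)) (Stmt12.Dp n ^ k) ∂μ :=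
    fun k => Stmt12.exists_poly hK _
  choose P hP using hex
  have hPg : ∀ (k : ℕ) (x : Heis n),
      MvPolynomial.eval (coords x) (P k) = ∫ y, Stmt12.gq x y ^ k ∂μ := by
    intro k x
    rw [hP k x]
    simp only [Stmt12.eval_Dp_pow]
  have hSne : (suppH μ).Nonempty := by
    by_contra h
    rw [not_nonempty_iff_eq_empty] at h
    have h0 : μ univ = 0 := by
      have := Stmt12.compl_suppH_null μ
      rwa [h, compl_empty] at this
    exact hμ (Measure.measure_univ_eq_zero.mp h0)
  obtain ⟨x₀, hx₀⟩ := hSne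
  set q : ℕ → MvPolynomial (Fin (2 * n + 1)) ℝ :=
    fun k => P k - MvPolynomial.C (MvPolynomial.eval (coords x₀) (P k)) with hq
  have hchar : suppH μ = {x : Heis n | ∀ k : ℕ, MvPolynomial.eval (coords x) (q k) = 0} := by
    ext x
    simp only [mem_setOf_eq, hq, map_sub, MvPolynomial.eval_C, sub_eq_zero]
    constructor
    · intro hx k
      rw [hPg k x, hPg k x₀]
      exact Stmt12.moment_eq hud hx hx₀ k
    · intro hx
      refine Stmt12.mem_supp_of_moments hK hx₀ fun k => ?_
      rw [← hPg k x, ← hPg k x₀]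
      exact hx k
  have hfg : (Ideal.span (Set.range q)).FG := IsNoetherian.noetherian _
  obtain ⟨T, hT⟩ := hfg
  refine ⟨T.card, fun i => ((T.equivFin.symm i : T) : MvPolynomial (Fin (2 * n + 1)) ℝ), ?_⟩
  rw [hchar]
  ext x
  simp only [mem_setOf_eq]
  have hspan : ∀ (s : Set (MvPolynomial (Fin (2 * n + 1)) ℝ)),
      (∀ g ∈ s, MvPolynomial.eval (coords x) g = 0) →
      ∀ h ∈ Ideal.span s, MvPolynomial.eval (coords x) h = 0 := by
    intro s hs h hh
    have hle : Ideal.span s ≤ RingHom.ker (MvPolynomial.eval (coords x)) :=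
      Ideal.span_le.2 fun g hg => RingHom.mem_ker.mpr (hs g hg)
    exact RingHom.mem_ker.mp (hle hh)
  constructor
  · intro hAll i
    have hmem : ((T.equivFin.symm i : T) : MvPolynomial (Fin (2 * n + 1)) ℝ)
        ∈ Ideal.span (Set.range q) := by
      rw [← hT]
      exact Ideal.subset_span (T.equivFin.symm i).2
    exact hspan (Set.range q) (by rintro g ⟨k, rfl⟩; exact hAll k) _ hmem
  · intro hAll k
    have hmem : q k ∈ Ideal.span (↑T : Set (MvPolynomial (Fin (2 * n + 1)) ℝ)) := by
      rw [hT]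
      exact Ideal.subset_span (Set.mem_range_self k)
    refine hspan (↑T) ?_ (q k) hmem
    intro g hg
    have hgeq : g = ((T.equivFin.symm (T.equivFin ⟨g, hg⟩) : T) : MvPolynomial (Fin (2 * n + 1)) ℝ) := by
      simp
    rw [hgeq]
    exact hAll (T.equivFin ⟨g, hg⟩)
end
end
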